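/- Suppose the interface Dirichlet data and fluxes of the two boxes coincide, i.e. v₁ = T^α₁₁ u₁ + T^α₁₃ u₃, v₃ = T^α₃₁ u₁ + T^α₃₃ u₃, v₂ = T^β₂₂ u₂ + T^β₂₃ u₃, and v₃ = T^β₃₂ u₂ + T^β₃₃ u₃, and that T^α₃₃ − T^β₃₃ is invertible. Set w := (T^α₃₃ − T^β₃₃)⁻¹ (−T^α₃₁ u₁ + T^β₃₂ u₂). Then the exterior fluxes are given by the merged Dirichlet-to-Neumann map: v₁ = T^α₁₁ u₁ + T^α₁₃ w and v₂ = T^β₂₂ u₂ + T^β₂₃ w; equivalently, the stacked vector (v₁, v₂) equals T^τ applied to (u₁, u₂), where T^τ is the block matrix [[T^α₁₁, 0], [0, T^β₂₂]] + [[T^α₁₃], [T^β₂₃]] · (T^α₃₃ − T^β₃₃)⁻¹ · [−T^α₃₁ | T^β₃₂]. -/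

import Mathlib

/-- Merge of two Dirichlet-to-Neumann operators: the exterior fluxes are given
by the merged Dirichlet-to-Neumann map `T^τ`. -/
theorem hps_merge_DtN {n₁ n₂ n₃ : ℕ}
    (Tα₁₁ : Matrix (Fin n₁) (Fin n₁) ℝ) (Tα₁₃ : Matrix (Fin n₁) (Fin n₃) ℝ)
    (Tα₃₁ : Matrix (Fin n₃) (Fin n₁) ℝ) (Tα₃₃ : Matrix (Fin n₃) (Fin n₃) ℝ)
    (Tβ₂₂ : Matrix (Fin n₂) (Fin n₂) ℝ) (Tβ₂₃ : Matrix (Fin n₂) (Fin n₃) ℝ)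
    (Tβ₃₂ : Matrix (Fin n₃) (Fin n₂) ℝ) (Tβ₃₃ : Matrix (Fin n₃) (Fin n₃) ℝ)
    (u₁ v₁ : Fin n₁ → ℝ) (u₂ v₂ : Fin n₂ → ℝ) (u₃ v₃ : Fin n₃ → ℝ)
    (hα₁ : v₁ = Tα₁₁.mulVec u₁ + Tα₁₃.mulVec u₃)
    (hα₃ : v₃ = Tα₃₁.mulVec u₁ + Tα₃₃.mulVec u₃)
    (hβ₂ : v₂ = Tβ₂₂.mulVec u₂ + Tβ₂₃.mulVec u₃)
    (hβ₃ : v₃ = Tβ₃₂.mulVec u₂ + Tβ₃₃.mulVec u₃)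
    (hinv : IsUnit (Tα₃₃ - Tβ₃₃))
    (w : Fin n₃ → ℝ)
    (hw : w = (Tα₃₃ - Tβ₃₃)⁻¹.mulVec (-(Tα₃₁.mulVec u₁) + Tβ₃₂.mulVec u₂)) :
    v₁ = Tα₁₁.mulVec u₁ + Tα₁₃.mulVec w ∧
    v₂ = Tβ₂₂.mulVec u₂ + Tβ₂₃.mulVec w ∧
    Sum.elim v₁ v₂ =
      (Matrix.fromBlocks Tα₁₁ 0 0 Tβ₂₂ +
        Matrix.fromRows Tα₁₃ Tβ₂₃ * (Tα₃₃ - Tβ₃₃)⁻¹ *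
          Matrix.fromCols (-Tα₃₁) Tβ₃₂).mulVec (Sum.elim u₁ u₂) := by
  have hkey : (Tα₃₃ - Tβ₃₃).mulVec u₃ = -(Tα₃₁.mulVec u₁) + Tβ₃₂.mulVec u₂ := by
    have := hα₃.symm.trans hβ₃
    simp only [Matrix.sub_mulVec]
    linear_combination (norm := module) this
  have hwu : w = u₃ := by
    rw [hw, ← hkey, Matrix.mulVec_mulVec,
      Matrix.nonsing_inv_mul _ ((Matrix.isUnit_iff_isUnit_det _).mp hinv),
      Matrix.one_mulVec]
  subst hwu
  refine ⟨hα₁, hβ₂, ?_⟩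
  rw [Matrix.add_mulVec, Matrix.fromBlocks_mulVec, ← Matrix.mulVec_mulVec,
    Matrix.fromCols_mulVec_sumElim, Matrix.neg_mulVec, ← hkey,
    Matrix.mulVec_mulVec, Matrix.mul_assoc,
    Matrix.nonsing_inv_mul _ ((Matrix.isUnit_iff_isUnit_det _).mp hinv),
    Matrix.mul_one, Matrix.fromRows_mulVec]
  ext (i | i) <;>
    simp [hα₁, hβ₂, Matrix.mulVec]
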